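/- arXiv:1705.10065 — 2 statements merged into one kernel-verified Lean document; each statement's English description precedes it below -/
import Mathlib

section
/- For every n ≥ 0: S_3(3n+2) = 5·S_3(n) − S_3(3n) − S_3(3n+1), S_3(9n) = −S_3(n) + 2·S_3(3n), S_3(9n+1) = −2·S_3(n) + 2·S_3(3n) + S_3(3n+1), S_3(9n+2) = 3·S_3(n) + S_3(3n) − S_3(3n+1), S_3(9n+4) = −S_3(n) + 2·S_3(3n+1), S_3(9n+6) = 8·S_3(n) − S_3(3n) − 2·S_3(3n+1), and S_3(9n+7) = 8·S_3(n) − 2·S_3(3n) − S_3(3n+1). -/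
/-- Number of distinct words in `L_b` (no leading zero, or empty) occurring as
scattered subwords (subsequences) of `u`. -/
def lbCount (u : List ℕ) : ℕ :=
  ((u.sublists.filter (fun v => v.head? ≠ some 0)).dedup).length

/-- `S_b(n)`: number of distinct words of `L_b` occurring as scattered subwords of
the base-`b` expansion of `n` (most significant digit first, `rep_b(0) = ε`). -/
def Sb (b n : ℕ) : ℕ := lbCount ((Nat.digits b n).reverse)

/-- Summatory function `A_b(n) = ∑_{j<n} S_b(j)`. -/
def Asum (b n : ℕ) : ℕ := ∑ j ∈ Finset.range n, Sb b j

open Finset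

/-- Finset of sublists (scattered subwords). -/
def subsF (u : List ℕ) : Finset (List ℕ) := u.sublists.toFinset

/-- good subwords (empty or no leading zero). -/
def Af (u : List ℕ) : Finset (List ℕ) := (subsF u).filter (fun v => v.head? ≠ some 0)

/-- good subwords ending in `a`. -/
def Ef (u : List ℕ) (a : ℕ) : Finset (List ℕ) :=
  (Af u).filter (fun v => v.getLast? = some a)

lemma mem_subsF {u v : List ℕ} : v ∈ subsF u ↔ v.Sublist u := by
  simp [subsF, List.mem_sublists]

lemma mem_Af {u v : List ℕ} : v ∈ Af u ↔ v.Sublist u ∧ v.head? ≠ some 0 := by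
  simp [Af, mem_subsF]

lemma mem_Ef {u v : List ℕ} {a : ℕ} :
    v ∈ Ef u a ↔ (v.Sublist u ∧ v.head? ≠ some 0) ∧ v.getLast? = some a := by
  simp [Ef, mem_Af]

lemma lbCount_eq (u : List ℕ) : lbCount u = (Af u).card := by
  rw [lbCount, ← List.card_toFinset]
  congr 1
  ext v
  simp [Af, mem_subsF, List.mem_sublists]

lemma nil_mem_Af (u : List ℕ) : ([] : List ℕ) ∈ Af u := by
  simp [mem_Af]

/-- the new good subwords after appending `c`; `w` ranges over this set, new word `w ++ [c]`. -/
def Cf (u : List ℕ) (c : ℕ) : Finset (List ℕ) :=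
  (subsF u).filter (fun w => (w ++ [c]).head? ≠ some 0)

lemma mem_Cf {u w : List ℕ} {c : ℕ} :
    w ∈ Cf u c ↔ w.Sublist u ∧ (w ++ [c]).head? ≠ some 0 := by
  simp [Cf, mem_subsF]

lemma card_Cf (u : List ℕ) (c : ℕ) :
    (Cf u c).card + (if c = 0 then 1 else 0) = (Af u).card := by
  by_cases hc : c = 0
  · subst hc
    simp only [if_pos rfl]
    have : Cf u 0 = (Af u).erase [] := by
      ext w
      rcases w with _ | ⟨x, w⟩ <;> simp [mem_Cf, mem_Af, Finset.mem_erase]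
    rw [this]
    exact Finset.card_erase_add_one (nil_mem_Af u)
  · have : Cf u c = Af u := by
      ext w
      rcases w with _ | ⟨x, w⟩ <;> simp [mem_Cf, mem_Af, hc]
    simp [this, hc]

lemma Af_concat (u : List ℕ) (c : ℕ) :
    Af (u ++ [c]) = Af u ∪ (Cf u c).image (· ++ [c]) := by
  ext v
  simp only [mem_Af, Finset.mem_union, Finset.mem_image, mem_Cf]
  constructor
  · rintro ⟨hs, hh⟩
    rcases (List.sublist_append_iff.1 hs) with ⟨v₁, v₂, rfl, h₁, h₂⟩
    rcases (List.sublist_singleton.1 h₂) with rfl | rfl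
    · left; exact ⟨by simpa using h₁, by simpa using hh⟩
    · right; exact ⟨v₁, ⟨h₁, hh⟩, rfl⟩
  · rintro (⟨hs, hh⟩ | ⟨w, ⟨hs, hh⟩, rfl⟩)
    · exact ⟨hs.trans (List.sublist_append_left u [c]), hh⟩
    · exact ⟨hs.append (List.Sublist.refl [c]), hh⟩

lemma Ef_subset_image (u : List ℕ) (c : ℕ) :
    Ef u c ⊆ (Cf u c).image (· ++ [c]) := by
  intro v hv
  rw [mem_Ef] at hv
  obtain ⟨⟨hs, hh⟩, hl⟩ := hv
  have hne : v ≠ [] := by rintro rfl; simp at hl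
  have hgl : v.getLast hne = c := by
    have := List.getLast?_eq_getLast hne
    rw [hl] at this; exact (Option.some.inj this).symm
  have hv' : v.dropLast ++ [c] = v := by rw [← hgl]; exact List.dropLast_concat_getLast hne
  refine Finset.mem_image.2 ⟨v.dropLast, mem_Cf.2 ⟨(List.dropLast_sublist v).trans hs, ?_⟩, hv'⟩
  rw [hv']; exact hh

lemma Af_inter_image (u : List ℕ) (c : ℕ) :
    Af u ∩ (Cf u c).image (· ++ [c]) = Ef u c := by
  ext v
  constructor
  · intro hv
    obtain ⟨h1, h2⟩ := Finset.mem_inter.1 hv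
    obtain ⟨w, _, rfl⟩ := Finset.mem_image.1 h2
    rw [mem_Ef]
    exact ⟨mem_Af.1 h1, by simp⟩
  · intro hv
    exact Finset.mem_inter.2 ⟨(Finset.filter_subset _ _ hv), Ef_subset_image u c hv⟩

lemma card_image_Cf (u : List ℕ) (c : ℕ) :
    ((Cf u c).image (· ++ [c])).card = (Cf u c).card :=
  Finset.card_image_of_injective _ (List.append_left_injective [c])

/-- (I1) -/
lemma card_Af_concat (u : List ℕ) (c : ℕ) :
    (Af (u ++ [c])).card + (Ef u c).card + (if c = 0 then 1 else 0)
      = 2 * (Af u).card := by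
  have h := Finset.card_union_add_card_inter (Af u) ((Cf u c).image (· ++ [c]))
  rw [← Af_concat, Af_inter_image, card_image_Cf] at h
  have h2 := card_Cf u c
  omega

/-- (I2) -/
lemma card_Ef_concat_self (u : List ℕ) (c : ℕ) :
    (Ef (u ++ [c]) c).card + (if c = 0 then 1 else 0) = (Af u).card := by
  have he : Ef (u ++ [c]) c = (Cf u c).image (· ++ [c]) := by
    apply Finset.Subset.antisymm
    · intro v hv
      rw [mem_Ef] at hv
      obtain ⟨hA, hl⟩ := hv
      have : v ∈ Af (u ++ [c]) := mem_Af.2 hA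
      rw [Af_concat] at this
      rcases Finset.mem_union.1 this with h | h
      · exact Ef_subset_image u c (mem_Ef.2 ⟨mem_Af.1 h, hl⟩)
      · exact h
    · intro v hv
      obtain ⟨w, hw, rfl⟩ := Finset.mem_image.1 hv
      exact mem_Ef.2 ⟨⟨(mem_Cf.1 hw).1.append (List.Sublist.refl [c]),
        (mem_Cf.1 hw).2⟩, by simp⟩
  rw [he, card_image_Cf]
  exact card_Cf u c

/-- (I3) -/
lemma Ef_concat_ne (u : List ℕ) {a c : ℕ} (h : a ≠ c) :
    Ef (u ++ [c]) a = Ef u a := by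
  ext v
  simp only [mem_Ef]
  constructor
  · rintro ⟨⟨hs, hh⟩, hl⟩
    rcases (List.sublist_append_iff.1 hs) with ⟨v₁, v₂, rfl, h₁, h₂⟩
    rcases (List.sublist_singleton.1 h₂) with rfl | rfl
    · exact ⟨⟨by simpa using h₁, by simpa using hh⟩, by simpa using hl⟩
    · exfalso; simp at hl; exact h hl.symm
  · rintro ⟨⟨hs, hh⟩, hl⟩
    exact ⟨⟨hs.trans (List.sublist_append_left u [c]), hh⟩, hl⟩

/-- (I4) grading identity for ternary words. -/
lemma card_Af_grading (u : List ℕ) (hu : ∀ x ∈ u, x < 3) :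
    (Af u).card = 1 + (Ef u 0).card + (Ef u 1).card + (Ef u 2).card := by
  have hpart : Af u = insert [] (Ef u 0 ∪ Ef u 1 ∪ Ef u 2) := by
    ext v
    simp only [Finset.mem_insert, Finset.mem_union, mem_Af, mem_Ef]
    constructor
    · intro hv
      rcases eq_or_ne v [] with rfl | hne
      · left; rfl
      · right
        have hgl := List.getLast?_eq_getLast hne
        have hmem : v.getLast hne ∈ u := hv.1.subset (List.getLast_mem hne)
        have h3 : v.getLast hne < 3 := hu _ hmem
        interval_cases h : (v.getLast hne)
        · left; left; exact ⟨hv, hgl⟩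
        · left; right; exact ⟨hv, hgl⟩
        · right; exact ⟨hv, hgl⟩
    · rintro (rfl | (⟨h, _⟩ | ⟨h, _⟩) | ⟨h, _⟩)
      · exact ⟨List.nil_sublist u, by simp⟩
      all_goals exact h
  have hdisj01 : Disjoint (Ef u 0) (Ef u 1) := by
    rw [Finset.disjoint_left]; intro v h0 h1
    have := (mem_Ef.1 h0).2; rw [(mem_Ef.1 h1).2] at this; simp at this
  have hdisj2 : Disjoint (Ef u 0 ∪ Ef u 1) (Ef u 2) := by
    rw [Finset.disjoint_left]; intro v h01 h2
    rcases Finset.mem_union.1 h01 with h | h <;>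
      · have := (mem_Ef.1 h).2; rw [(mem_Ef.1 h2).2] at this; simp at this
  have hnil : ([] : List ℕ) ∉ Ef u 0 ∪ Ef u 1 ∪ Ef u 2 := by
    intro h
    rcases Finset.mem_union.1 h with h | h
    · rcases Finset.mem_union.1 h with h | h <;> · have := (mem_Ef.1 h).2; simp at this
    · have := (mem_Ef.1 h).2; simp at this
  rw [hpart, Finset.card_insert_of_notMem hnil, Finset.card_union_of_disjoint hdisj2,
    Finset.card_union_of_disjoint hdisj01]
  ring

lemma rep_step {n : ℕ} (hn : 0 < n) {r : ℕ} (hr : r < 3) :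
    (Nat.digits 3 (3 * n + r)).reverse = (Nat.digits 3 n).reverse ++ [r] := by
  have h1 : Nat.digits 3 (3 * n + r) = r :: Nat.digits 3 n := by
    rw [Nat.digits_def' (by norm_num : (1:ℕ) < 3) (by omega)]
    congr 1
    · omega
    · congr 1; omega
  rw [h1, List.reverse_cons]

theorem stmt10 (n : ℕ) :
    ((Sb 3 (3 * n + 2) : ℤ) = 5 * Sb 3 n - Sb 3 (3 * n) - Sb 3 (3 * n + 1)) ∧
    ((Sb 3 (9 * n) : ℤ) = -(Sb 3 n : ℤ) + 2 * Sb 3 (3 * n)) ∧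
    ((Sb 3 (9 * n + 1) : ℤ) = -2 * Sb 3 n + 2 * Sb 3 (3 * n) + Sb 3 (3 * n + 1)) ∧
    ((Sb 3 (9 * n + 2) : ℤ) = 3 * Sb 3 n + Sb 3 (3 * n) - Sb 3 (3 * n + 1)) ∧
    ((Sb 3 (9 * n + 4) : ℤ) = -(Sb 3 n : ℤ) + 2 * Sb 3 (3 * n + 1)) ∧
    ((Sb 3 (9 * n + 6) : ℤ) = 8 * Sb 3 n - Sb 3 (3 * n) - 2 * Sb 3 (3 * n + 1)) ∧
    ((Sb 3 (9 * n + 7) : ℤ) = 8 * Sb 3 n - 2 * Sb 3 (3 * n) - Sb 3 (3 * n + 1)) := by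
  rcases Nat.eq_zero_or_pos n with rfl | hn
  · have h0 : Sb 3 0 = 1 := by
      rw [Sb, (by norm_num : Nat.digits 3 0 = [])]; rfl
    have h1 : Sb 3 1 = 2 := by
      rw [Sb, (by norm_num : Nat.digits 3 1 = [1])]; rfl
    have h2 : Sb 3 2 = 2 := by
      rw [Sb, (by norm_num : Nat.digits 3 2 = [2])]; rfl
    have h4 : Sb 3 4 = 3 := by
      rw [Sb, (by norm_num : Nat.digits 3 4 = [1, 1])]; rfl
    have h6 : Sb 3 6 = 3 := by
      rw [Sb, (by norm_num : Nat.digits 3 6 = [0, 2])]; rfl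
    have h7 : Sb 3 7 = 4 := by
      rw [Sb, (by norm_num : Nat.digits 3 7 = [1, 2])]; rfl
    norm_num [h0, h1, h2, h4, h6, h7]
  · set u := (Nat.digits 3 n).reverse with hu
    have hdig : ∀ x ∈ u, x < 3 := by
      intro x hx
      exact Nat.digits_lt_base (by norm_num) (by simpa [hu] using hx)
    have r0 : (Nat.digits 3 (3 * n)).reverse = u ++ [0] := by
      exact rep_step hn (r := 0) (by norm_num)
    have r1 : (Nat.digits 3 (3 * n + 1)).reverse = u ++ [1] := rep_step hn (by norm_num)
    have r2 : (Nat.digits 3 (3 * n + 2)).reverse = u ++ [2] := rep_step hn (by norm_num)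
    have h3n : 0 < 3 * n := by omega
    have r90 : (Nat.digits 3 (9 * n)).reverse = u ++ [0] ++ [0] := by
      rw [show (9:ℕ) * n = 3 * (3 * n) + 0 by ring]
      rw [rep_step h3n (by norm_num), r0]
    have r91 : (Nat.digits 3 (9 * n + 1)).reverse = u ++ [0] ++ [1] := by
      rw [show (9:ℕ) * n + 1 = 3 * (3 * n) + 1 by ring, rep_step h3n (by norm_num), r0]
    have r92 : (Nat.digits 3 (9 * n + 2)).reverse = u ++ [0] ++ [2] := by
      rw [show (9:ℕ) * n + 2 = 3 * (3 * n) + 2 by ring, rep_step h3n (by norm_num), r0]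
    have r94 : (Nat.digits 3 (9 * n + 4)).reverse = u ++ [1] ++ [1] := by
      rw [show (9:ℕ) * n + 4 = 3 * (3 * n + 1) + 1 by ring,
        rep_step (by omega) (by norm_num), r1]
    have r96 : (Nat.digits 3 (9 * n + 6)).reverse = u ++ [2] ++ [0] := by
      rw [show (9:ℕ) * n + 6 = 3 * (3 * n + 2) + 0 by ring]
      rw [rep_step (by omega) (by norm_num), r2]
    have r97 : (Nat.digits 3 (9 * n + 7)).reverse = u ++ [2] ++ [1] := by
      rw [show (9:ℕ) * n + 7 = 3 * (3 * n + 2) + 1 by ring,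
        rep_step (by omega) (by norm_num), r2]
    have sn : Sb 3 n = (Af u).card := lbCount_eq _
    have s0 : Sb 3 (3 * n) = (Af (u ++ [0])).card := by rw [Sb, r0, lbCount_eq]
    have s1 : Sb 3 (3 * n + 1) = (Af (u ++ [1])).card := by rw [Sb, r1, lbCount_eq]
    have s2 : Sb 3 (3 * n + 2) = (Af (u ++ [2])).card := by rw [Sb, r2, lbCount_eq]
    have s90 : Sb 3 (9 * n) = (Af (u ++ [0] ++ [0])).card := by rw [Sb, r90, lbCount_eq]
    have s91 : Sb 3 (9 * n + 1) = (Af (u ++ [0] ++ [1])).card := by rw [Sb, r91, lbCount_eq]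
    have s92 : Sb 3 (9 * n + 2) = (Af (u ++ [0] ++ [2])).card := by rw [Sb, r92, lbCount_eq]
    have s94 : Sb 3 (9 * n + 4) = (Af (u ++ [1] ++ [1])).card := by rw [Sb, r94, lbCount_eq]
    have s96 : Sb 3 (9 * n + 6) = (Af (u ++ [2] ++ [0])).card := by rw [Sb, r96, lbCount_eq]
    have s97 : Sb 3 (9 * n + 7) = (Af (u ++ [2] ++ [1])).card := by rw [Sb, r97, lbCount_eq]
    have G := card_Af_grading u hdig
    have I10 := card_Af_concat u 0
    have I11 := card_Af_concat u 1
    have I12 := card_Af_concat u 2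
    have I20 := card_Ef_concat_self u 0
    have I21 := card_Ef_concat_self u 1
    have I22 := card_Ef_concat_self u 2
    have J00 := card_Af_concat (u ++ [0]) 0
    have J01 := card_Af_concat (u ++ [0]) 1
    have J02 := card_Af_concat (u ++ [0]) 2
    have J11 := card_Af_concat (u ++ [1]) 1
    have J20 := card_Af_concat (u ++ [2]) 0
    have J21 := card_Af_concat (u ++ [2]) 1
    rw [Ef_concat_ne u (by norm_num : (1:ℕ) ≠ 0)] at J01
    rw [Ef_concat_ne u (by norm_num : (2:ℕ) ≠ 0)] at J02
    rw [Ef_concat_ne u (by norm_num : (0:ℕ) ≠ 2)] at J20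
    rw [Ef_concat_ne u (by norm_num : (1:ℕ) ≠ 2)] at J21
    norm_num at I10 I11 I12 I20 I21 I22 J00 J01 J02 J11 J20 J21
    simp only [List.append_assoc, List.singleton_append] at s90 s91 s92 s94 s96 s97
    refine ⟨?_, ?_, ?_, ?_, ?_, ?_, ?_⟩ <;>
      simp only [sn, s0, s1, s2, s90, s91, s92, s94, s96, s97] <;> omega
end

section
/- For all b ≥ 2, all ℓ ≥ 1, and all x, y ∈ {1,...,b−1}: A_b(x·b^ℓ + y·b^{ℓ-1}) = (4xb − 2x + 4y − 2b)·(2b−1)^{ℓ-1} if y ≤ x, and A_b(x·b^ℓ + y·b^{ℓ-1}) = (4xb − 2x + 4y − 2b − 1)·(2b−1)^{ℓ-1} if y > x. -/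
section Aux
open Finset

/-- The finset of allowed (no leading zero or empty) sublists of `w`. -/
def sfin (w : List ℕ) : Finset (List ℕ) :=
  (w.sublists.filter (fun v => v.head? ≠ some 0)).toFinset

lemma mem_sfin {w v : List ℕ} : v ∈ sfin w ↔ v.Sublist w ∧ v.head? ≠ some 0 := by
  simp [sfin, List.mem_filter, List.mem_sublists]

lemma lbCount_eq_card (w : List ℕ) : lbCount w = (sfin w).card :=
  (List.card_toFinset _).symm

lemma nil_mem_sfin (w : List ℕ) : ([] : List ℕ) ∈ sfin w := by
  simp [mem_sfin]

/-- Decomposition of the allowed sublists of `w ++ [r]`. -/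
lemma sfin_concat (w : List ℕ) (r : ℕ) :
    sfin (w ++ [r]) = sfin w ∪
      ((w.sublists.filter (fun s => (s ++ [r]).head? ≠ some 0)).toFinset).image
        (fun s => s ++ [r]) := by
  unfold sfin
  rw [List.sublists_concat, List.filter_append, List.toFinset_append, List.filter_map]
  congr 1
  ext t
  simp [List.mem_filter, Function.comp]

lemma card_Bfin (w : List ℕ) (r : ℕ) :
    ((w.sublists.filter (fun s => (s ++ [r]).head? ≠ some 0)).toFinset).card
      + (if r = 0 then 1 else 0) = (sfin w).card := by
  by_cases hr : r = 0
  · subst hr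
    have h : (w.sublists.filter (fun s => (s ++ [0]).head? ≠ some 0)).toFinset
        = (sfin w).erase [] := by
      ext s
      simp only [List.mem_toFinset, List.mem_filter, List.mem_sublists, mem_erase, mem_sfin,
        decide_eq_true_eq]
      cases s <;> simp
    rw [h]
    simpa using Finset.card_erase_add_one (nil_mem_sfin w)
  · have h : (w.sublists.filter (fun s => (s ++ [r]).head? ≠ some 0)).toFinset = sfin w := by
      ext s
      simp only [List.mem_toFinset, List.mem_filter, List.mem_sublists, mem_sfin,
        decide_eq_true_eq]
      cases s <;> simp [hr]
    rw [h, if_neg hr, Nat.add_zero]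

lemma inter_eq (w : List ℕ) (r : ℕ) :
    sfin w ∩ (((w.sublists.filter (fun s => (s ++ [r]).head? ≠ some 0)).toFinset).image
        (fun s => s ++ [r]))
      = (sfin w).filter (fun t => t.getLast? = some r) := by
  ext t
  simp only [mem_inter, mem_image, List.mem_toFinset, List.mem_filter, List.mem_sublists,
    mem_filter, decide_eq_true_eq]
  constructor
  · rintro ⟨ht, s, _, rfl⟩
    exact ⟨ht, List.getLast?_concat⟩
  · rintro ⟨ht, hlast⟩
    refine ⟨ht, t.dropLast, ⟨?_, ?_⟩, ?_⟩
    · exact (List.dropLast_sublist t).trans (mem_sfin.1 ht).1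
    · rw [List.dropLast_append_getLast? r hlast]
      exact (mem_sfin.1 ht).2
    · exact List.dropLast_append_getLast? r hlast

/-- The per-digit recurrence. -/
lemma lbCount_concat (w : List ℕ) (r : ℕ) :
    lbCount (w ++ [r]) + ((sfin w).filter (fun t => t.getLast? = some r)).card
      + (if r = 0 then 1 else 0) = 2 * lbCount w := by
  have hinj : Function.Injective (fun s : List ℕ => s ++ [r]) := by
    intro a b h; simpa using h
  have h1 := Finset.card_union_add_card_inter (sfin w)
    (((w.sublists.filter (fun s => (s ++ [r]).head? ≠ some 0)).toFinset).image
      (fun s => s ++ [r]))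
  rw [← sfin_concat, inter_eq, Finset.card_image_of_injective _ hinj] at h1
  have h2 := card_Bfin w r
  rw [lbCount_eq_card, lbCount_eq_card]
  by_cases hr : r = 0
  · subst hr
    rw [if_pos rfl] at h2 ⊢
    omega
  · rw [if_neg hr] at h2 ⊢
    omega

lemma sum_last (b : ℕ) (w : List ℕ) (hw : ∀ d ∈ w, d < b) :
    (∑ r ∈ range b, ((sfin w).filter (fun t => t.getLast? = some r)).card) + 1
      = lbCount w := by
  rw [lbCount_eq_card]
  have h1 : ∀ r, ((sfin w).filter (fun t => t.getLast? = some r)).card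
      = ∑ t ∈ sfin w, if t.getLast? = some r then 1 else 0 :=
    fun r => Finset.card_filter _ _
  simp only [h1]
  rw [Finset.sum_comm]
  have h2 : ∀ t ∈ sfin w, (∑ r ∈ range b, if t.getLast? = some r then 1 else 0)
      = if t = [] then 0 else 1 := by
    intro t ht
    rcases eq_or_ne t [] with rfl | hne
    · simp
    · obtain ⟨d, hd⟩ : ∃ d, t.getLast? = some d := by
        cases h : t.getLast? with
        | none => exact absurd (List.getLast?_eq_none_iff.1 h) hne
        | some d => exact ⟨d, rfl⟩
      have hdmem : d ∈ t := by
        have h1 := List.getLast?_eq_getLast_of_ne_nil hne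
        rw [hd] at h1
        rw [Option.some_inj.1 h1]
        exact List.getLast_mem hne
      have hdb : d < b := hw d (((mem_sfin.1 ht).1).mem hdmem)
      rw [if_neg hne]
      have : ∀ r, (t.getLast? = some r) ↔ (r = d) := by
        intro r; rw [hd]; exact ⟨fun h => (Option.some_inj.1 h).symm, fun h => by rw [h]⟩
      simp only [this]
      rw [Finset.sum_ite_eq' (range b) d (fun _ => 1), if_pos (mem_range.2 hdb)]
  rw [Finset.sum_congr rfl h2]
  have h3 : (∑ t ∈ sfin w, if t = [] then 0 else 1)
      + (∑ t ∈ sfin w, if t = ([] : List ℕ) then 1 else 0) = (sfin w).card := by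
    rw [← Finset.sum_add_distrib, Finset.card_eq_sum_ones]
    apply Finset.sum_congr rfl
    intro t _
    by_cases h : t = [] <;> simp [h]
  have h4 : (∑ t ∈ sfin w, if t = ([] : List ℕ) then 1 else 0) = 1 := by
    rw [Finset.sum_ite_eq' (sfin w) ([] : List ℕ) (fun _ => 1), if_pos (nil_mem_sfin w)]
  omega

/-- Key identity: summing over all possible appended digits multiplies the count by `2b-1`. -/
lemma sum_lbCount_concat (b : ℕ) (hb : 1 ≤ b) (w : List ℕ) (hw : ∀ d ∈ w, d < b) :
    (∑ r ∈ range b, lbCount (w ++ [r])) + lbCount w = 2 * b * lbCount w := by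
  have h1 : ∑ r ∈ range b, (lbCount (w ++ [r])
      + ((sfin w).filter (fun t => t.getLast? = some r)).card
      + (if r = 0 then 1 else 0)) = ∑ r ∈ range b, 2 * lbCount w :=
    Finset.sum_congr rfl (fun r _ => lbCount_concat w r)
  rw [Finset.sum_const, card_range, smul_eq_mul] at h1
  simp only [Finset.sum_add_distrib] at h1
  have h2 : (∑ r ∈ range b, if r = 0 then 1 else 0) = 1 := by
    rw [Finset.sum_ite_eq' (range b) 0 (fun _ => 1), if_pos (mem_range.2 hb)]
  have h3 := sum_last b w hw
  have : b * (2 * lbCount w) = 2 * b * lbCount w := by ring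
  omega

lemma digits_mul_add {b n r : ℕ} (hb : 2 ≤ b) (hn : 0 < n) (hr : r < b) :
    Nat.digits b (n * b + r) = r :: Nat.digits b n := by
  rw [Nat.digits_def' (by omega : 1 < b) (by positivity)]
  congr 1
  · rw [Nat.mul_add_mod_of_lt hr]
  · rw [Nat.mul_comm, Nat.mul_add_div (by omega), Nat.div_eq_of_lt hr, Nat.add_zero]

lemma digits_lt (b n : ℕ) (hb : 2 ≤ b) : ∀ d ∈ Nat.digits b n, d < b :=
  fun _ hd => Nat.digits_lt_base (by omega) hd

/-- Sum of `Sb` over a full block of `b` consecutive values. -/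
lemma sum_Sb_block {b n : ℕ} (hb : 2 ≤ b) (hn : 0 < n) :
    (∑ r ∈ range b, Sb b (n * b + r)) + Sb b n = 2 * b * Sb b n := by
  have h : ∀ r ∈ range b, Sb b (n * b + r) = lbCount ((Nat.digits b n).reverse ++ [r]) := by
    intro r hr
    rw [Sb, digits_mul_add hb hn (mem_range.1 hr), List.reverse_cons]
  rw [Finset.sum_congr rfl h]
  exact sum_lbCount_concat b (by omega) _ (fun d hd => digits_lt b n hb d (by simpa using hd))

lemma Asum_add (b m k : ℕ) : Asum b (m + k) = Asum b m + ∑ r ∈ range k, Sb b (m + r) :=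
  Finset.sum_range_add _ m k

lemma Sb_zero (b : ℕ) : Sb b 0 = 1 := by
  rw [Sb, Nat.digits_zero]
  decide

lemma Sb_small {b x : ℕ} (hb : 2 ≤ b) (hx : 0 < x) (hxb : x < b) : Sb b x = 2 := by
  rw [Sb, Nat.digits_of_lt b x (by omega) hxb]
  have hs : ([x] : List ℕ).sublists = [[], [x]] := by
    simpa using List.sublists_concat ([] : List ℕ) x
  rw [List.reverse_singleton, lbCount, hs]
  have hx0 : x ≠ 0 := by omega
  simp [List.filter, hx0, List.dedup_cons_of_notMem, List.head?]

lemma Asum_base {b x : ℕ} (hb : 2 ≤ b) (hx : 1 ≤ x) (hxb : x ≤ b) :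
    Asum b x = 2 * x - 1 := by
  induction x with
  | zero => omega
  | succ n ih =>
    rcases Nat.eq_or_lt_of_le hx with h | h
    · simp [Asum, ← h, Finset.sum_range_one, Sb_zero]
    · have hn : 1 ≤ n := by omega
      have : Asum b (n + 1) = Asum b n + Sb b n := Finset.sum_range_succ _ n
      rw [this, ih hn (by omega), Sb_small hb (by omega) (by omega)]
      omega

/-- `A_b(N·b) = (2b-1)·A_b(N)` in additive form. -/
lemma Asum_mul_base {b N : ℕ} (hb : 2 ≤ b) (hN : 1 ≤ N) :
    Asum b (N * b) + Asum b N = 2 * b * Asum b N := by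
  induction N with
  | zero => omega
  | succ n ih =>
    rcases Nat.eq_or_lt_of_le hN with h | h
    · rw [← h]
      have h1 : Asum b (1 * b) = 2 * b - 1 := by
        rw [one_mul]; exact Asum_base hb (by omega) le_rfl
      have h2 : Asum b 1 = 1 := by simp [Asum, Finset.sum_range_one, Sb_zero]
      rw [h1, h2]; omega
    · have hn : 1 ≤ n := by omega
      have key := sum_Sb_block hb (by omega : 0 < n)
      have hstep : Asum b ((n + 1) * b) = Asum b (n * b) + ∑ r ∈ range b, Sb b (n * b + r) := by
        rw [add_mul, one_mul, Asum_add]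
      have hA : Asum b (n + 1) = Asum b n + Sb b n := Finset.sum_range_succ _ n
      have := ih hn
      have hmul : 2 * b * Asum b (n + 1) = 2 * b * Asum b n + 2 * b * Sb b n := by
        rw [hA]; ring
      omega

/-- `A_b(N·b^k) = (2b-1)^k · A_b(N)` over ℤ. -/
lemma Asum_mul_pow' {b N : ℕ} (hb : 2 ≤ b) (hN : 1 ≤ N) (k : ℕ) :
    (Asum b (N * b ^ k) : ℤ) = (2 * b - 1) ^ k * Asum b N := by
  induction k with
  | zero => simp
  | succ m ih =>
    have hNm : 1 ≤ N * b ^ m := Nat.one_le_iff_ne_zero.2 (by positivity)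
    have key := Asum_mul_base hb hNm
    have hcast : (Asum b (N * b ^ m * b) : ℤ)
        = (2 * b - 1) * (Asum b (N * b ^ m) : ℤ) := by
      have : (Asum b (N * b ^ m * b) : ℤ) + (Asum b (N * b ^ m) : ℤ)
          = 2 * b * (Asum b (N * b ^ m) : ℤ) := by exact_mod_cast congrArg (Nat.cast : ℕ → ℤ) key
      linarith
    have hpow : N * b ^ (m + 1) = N * b ^ m * b := by ring
    rw [hpow, hcast, ih]
    ring

lemma lbCount_pair {x r : ℕ} (hx : x ≠ 0) :
    lbCount [x, r] = if r = 0 ∨ r = x then 3 else 4 := by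
  have hs : ([x, r] : List ℕ).sublists = [[], [x], [r], [x, r]] := by
    have := List.sublists_concat ([x] : List ℕ) r
    have h1 : ([x] : List ℕ).sublists = [[], [x]] := by
      simpa using List.sublists_concat ([] : List ℕ) x
    simpa [h1] using this
  rw [lbCount, hs]
  by_cases hr : r = 0
  · subst hr
    rw [if_pos (Or.inl rfl)]
    have hf : List.filter (fun v => decide (v.head? ≠ some 0)) [[], [x], [0], [x, 0]]
        = [[], [x], [x, 0]] := by
      simp [List.filter_cons, hx]
    rw [hf, List.dedup_eq_self.2 (by simp [hx])]
    rfl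
  · by_cases hrx : r = x
    · subst hrx
      rw [if_pos (Or.inr rfl)]
      have hf : List.filter (fun v => decide (v.head? ≠ some 0)) [[], [r], [r], [r, r]]
          = [[], [r], [r], [r, r]] := by
        simp [List.filter_cons, hr]
      rw [hf, List.dedup_cons_of_notMem (by simp),
        List.dedup_cons_of_mem (by simp : ([r] : List ℕ) ∈ [[r], [r, r]]),
        List.dedup_eq_self.2 (by simp)]
      rfl
    · rw [if_neg (by tauto)]
      have hf : List.filter (fun v => decide (v.head? ≠ some 0)) [[], [x], [r], [x, r]]
          = [[], [x], [r], [x, r]] := by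
        simp [List.filter_cons, hx, hr]
      rw [hf, List.dedup_eq_self.2 (by simp [hx, hr, hrx, Ne.symm hrx])]
      rfl

lemma Sb_two_digits {b x r : ℕ} (hb : 2 ≤ b) (hx : 0 < x) (hxb : x < b) (hr : r < b) :
    Sb b (x * b + r) = if r = 0 ∨ r = x then 3 else 4 := by
  rw [Sb, digits_mul_add hb hx hr, Nat.digits_of_lt b x (by omega) hxb]
  exact lbCount_pair (by omega)

/-- The value `A_b(x·b + y)`. -/
lemma Asum_two_digits {b x y : ℕ} (hb : 2 ≤ b) (hx : 1 ≤ x) (hxb : x < b)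
    (hy : 1 ≤ y) (hyb : y < b) :
    (Asum b (x * b + y) : ℤ)
      = 4 * x * b - 2 * x + 4 * y - 2 * b - (if x < y then 1 else 0) := by
  have hshift : Asum b (x * b + y) = Asum b (x * b) + ∑ r ∈ range y, Sb b (x * b + r) :=
    Asum_add b (x * b) y
  have hAxb : (Asum b (x * b) : ℤ) = (2 * b - 1) * (2 * x - 1) := by
    have := Asum_mul_pow' hb hx 1
    rw [pow_one, pow_one] at this
    rw [this, Asum_base hb hx (le_of_lt hxb)]
    have : ((2 * x - 1 : ℕ) : ℤ) = 2 * x - 1 := by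
      have : 1 ≤ 2 * x := by omega
      push_cast [this]; omega
    rw [this]
  have hsum : (∑ r ∈ range y, (Sb b (x * b + r) : ℤ))
      = 4 * y - 1 - (if x < y then 1 else 0) := by
    have hval : ∀ r ∈ range y, (Sb b (x * b + r) : ℤ)
        = 4 - (if r = 0 then 1 else 0) - (if r = x then 1 else 0) := by
      intro r hr
      have hrb : r < b := lt_of_lt_of_le (mem_range.1 hr) (le_of_lt hyb)
      rw [Sb_two_digits hb hx hxb hrb]
      by_cases h0 : r = 0
      · have hne : ¬ r = x := by omega
        rw [if_pos (Or.inl h0), if_pos h0, if_neg hne]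
        norm_num
      · by_cases hxr : r = x
        · rw [if_pos (Or.inr hxr), if_neg h0, if_pos hxr]
          norm_num
        · rw [if_neg (by tauto), if_neg h0, if_neg hxr]
          norm_num
    rw [Finset.sum_congr rfl hval]
    have e1 : (∑ r ∈ range y, (if r = 0 then (1 : ℤ) else 0)) = 1 := by
      rw [Finset.sum_ite_eq' (range y) 0 (fun _ => (1 : ℤ)), if_pos (mem_range.2 hy)]
    have e2 : (∑ r ∈ range y, (if r = x then (1 : ℤ) else 0))
        = if x < y then 1 else 0 := by
      rw [Finset.sum_ite_eq' (range y) x (fun _ => (1 : ℤ))]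
      simp [mem_range]
    rw [Finset.sum_sub_distrib, Finset.sum_sub_distrib, e1, e2, Finset.sum_const, card_range,
      nsmul_eq_mul]
    ring
  have hcast : (Asum b (x * b + y) : ℤ)
      = (Asum b (x * b) : ℤ) + ∑ r ∈ range y, (Sb b (x * b + r) : ℤ) := by
    rw [hshift]; push_cast; ring
  rw [hcast, hAxb, hsum]
  ring

end Aux

theorem stmt15 (b ℓ x y : ℕ) (hb : 2 ≤ b) (hℓ : 1 ≤ ℓ)
    (hx : 1 ≤ x) (hxb : x < b) (hy : 1 ≤ y) (hyb : y < b) :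
    (if y ≤ x then
      (Asum b (x * b ^ ℓ + y * b ^ (ℓ - 1)) : ℤ) =
        (4 * x * b - 2 * x + 4 * y - 2 * b) * (2 * b - 1) ^ (ℓ - 1)
    else
      (Asum b (x * b ^ ℓ + y * b ^ (ℓ - 1)) : ℤ) =
        (4 * x * b - 2 * x + 4 * y - 2 * b - 1) * (2 * b - 1) ^ (ℓ - 1)) := by
  have hsplit : x * b ^ ℓ + y * b ^ (ℓ - 1) = (x * b + y) * b ^ (ℓ - 1) := by
    have h1 : b ^ ℓ = b ^ (ℓ - 1) * b := by
      conv_lhs => rw [show ℓ = (ℓ - 1) + 1 from by omega]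
      rw [pow_succ]
    rw [h1]
    ring
  have hN : 1 ≤ x * b + y := by nlinarith
  have hmain := Asum_mul_pow' hb hN (ℓ - 1)
  rw [hsplit, hmain, Asum_two_digits hb hx hxb hy hyb]
  by_cases h : y ≤ x
  · rw [if_pos h, if_neg (by omega : ¬ x < y)]
    ring
  · rw [if_neg h, if_pos (by omega : x < y)]
    ring
end
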